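/- Let L be an algebraic lattice equipped with the lower topology, whose closed sets are generated by the subbasis {↑x = {y ∈ L : x ≤ y} : x ∈ L}. Then L is a spectral space. -/

import Mathlib

open Set TopologicalSpace Filter Topology



universe u v

/-- A canonical hypergroup: a commutative, associative hyperoperation with
neutral element, unique inverses, and reversibility. -/
structure CanonicalHypergroup (R : Type u) where
  add : R → R → Set R
  zero : R
  neg : R → R
  add_nonempty : ∀ a b : R, (add a b).Nonempty
  add_comm : ∀ a b : R, add a b = add b a
  add_assoc : ∀ a b c : R, (⋃ x ∈ add a b, add x c) = ⋃ x ∈ add b c, add a x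
  add_zero : ∀ a : R, add a zero = {a}
  zero_mem_add_neg : ∀ a : R, zero ∈ add a (neg a)
  neg_unique : ∀ a b : R, zero ∈ add a b → b = neg a
  reversible : ∀ a b c : R, a ∈ add b c → c ∈ add (neg b) a

/-- A commutative Krasner hyperring. -/
structure KrasnerHyperring (R : Type u) extends CanonicalHypergroup R where
  mul : R → R → R
  mul_comm : ∀ a b : R, mul a b = mul b a
  mul_assoc : ∀ a b c : R, mul (mul a b) c = mul a (mul b c)
  mul_zero : ∀ a : R, mul a zero = zero
  distrib : ∀ a b c : R, (fun x => mul a x) '' add b c = add (mul a b) (mul a c)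

/-- A commutative unital Krasner hyperring. -/
structure UnitalKrasnerHyperring (R : Type u) extends KrasnerHyperring R where
  one : R
  mul_one : ∀ a : R, mul a one = a

/-- A hyperideal of a Krasner hyperring: a nonempty subset closed under
hyperaddition, negation, and multiplication by arbitrary elements. -/
def IsHyperideal {R : Type u} (H : KrasnerHyperring R) (I : Set R) : Prop :=
  I.Nonempty ∧ (∀ a ∈ I, ∀ b ∈ I, H.add a b ⊆ I) ∧ (∀ a ∈ I, H.neg a ∈ I) ∧
    ∀ r a : R, a ∈ I → H.mul r a ∈ I

/-- Iterated hypersum of a list of elements (empty sum is `{0}`). -/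
def listHyperSum {R : Type u} (H : CanonicalHypergroup R) : List R → Set R
  | [] => {H.zero}
  | a :: l => ⋃ x ∈ listHyperSum H l, H.add a x

/-- The sum of a family of hyperideals: all `x` lying in a finite hypersum of
elements picked from finitely many members of the family. -/
def hyperidealFamilySum {R : Type u} {Λ : Type v} (H : KrasnerHyperring R)
    (I : Λ → Set R) : Set R :=
  {x | ∃ (s : Finset Λ) (a : Λ → R), (∀ l ∈ s, a l ∈ I l) ∧
    x ∈ listHyperSum H.toCanonicalHypergroup (s.toList.map a)}

/-- The hyperideal generated by a set: the intersection of all hyperideals containing it. -/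
def genHyperideal {R : Type u} (H : KrasnerHyperring R) (S : Set R) : Set R :=
  ⋂₀ {I : Set R | IsHyperideal H I ∧ S ⊆ I}

/-- Compact element of the lattice of hyperideals. -/
def IsCompactHyperideal {R : Type u} (H : KrasnerHyperring R) (I : Set R) : Prop :=
  IsHyperideal H I ∧ ∀ (Λ : Type u) (J : Λ → Set R), (∀ l, IsHyperideal H (J l)) →
    I ⊆ genHyperideal H (⋃ l, J l) →
      ∃ s : Finset Λ, I ⊆ genHyperideal H (⋃ l ∈ s, J l)

/-- A spectral space: quasi-compact, sober, with a basis of quasi-compact open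
sets closed under finite intersections. -/
def IsSpectralSpace (X : Type u) [TopologicalSpace X] : Prop :=
  CompactSpace X ∧ QuasiSober X ∧ T0Space X ∧
    ∃ B : Set (Set X), TopologicalSpace.IsTopologicalBasis B ∧
      (∀ U ∈ B, IsCompact U) ∧ ∀ U ∈ B, ∀ V ∈ B, U ∩ V ∈ B

/-- The hyperspace of all hyperideals of `R`. -/
def HyperidealSpace {R : Type u} (H : KrasnerHyperring R) : Type u :=
  {I : Set R // IsHyperideal H I}

/-- The hyperspace of proper hyperideals of `R`. -/
def ProperHyperidealSpace {R : Type u} (H : KrasnerHyperring R) : Type u :=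
  {I : Set R // IsHyperideal H I ∧ I ≠ Set.univ}

/-- The lower topology on the hyperspace of all hyperideals: the closed sets are
generated by the subbasis `V_J = {I : J ⊆ I}` for hyperideals `J`. -/
instance hyperidealSpaceTopology {R : Type u} (H : KrasnerHyperring R) :
    TopologicalSpace (HyperidealSpace H) :=
  TopologicalSpace.generateFrom
    {U | ∃ J : Set R, IsHyperideal H J ∧ U = {I : HyperidealSpace H | ¬ J ⊆ I.1}}

/-- The lower topology on the hyperspace of proper hyperideals. -/
instance properHyperidealSpaceTopology {R : Type u} (H : KrasnerHyperring R) :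
    TopologicalSpace (ProperHyperidealSpace H) :=
  TopologicalSpace.generateFrom
    {U | ∃ J : Set R, IsHyperideal H J ∧ U = {I : ProperHyperidealSpace H | ¬ J ⊆ I.1}}

/-- The lower topology on a complete lattice: closed sets generated by the
subbasis of principal up-sets `Ici x`. -/
def latticeLowerTopology (L : Type u) [CompleteLattice L] : TopologicalSpace L :=
  TopologicalSpace.generateFrom {U | ∃ x : L, U = (Set.Ici x)ᶜ}

namespace AlgLatSpectral

/-- Alexander subbase lemma. -/
theorem alexander_sub {α : Type u} {g : Set (Set α)} {K : Set α}
    (h : ∀ c ⊆ g, K ⊆ ⋃₀ c → ∃ c' ⊆ c, c'.Finite ∧ K ⊆ ⋃₀ c') :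
    @IsCompact α (generateFrom g) K := by
  letI : TopologicalSpace α := generateFrom g
  rw [isCompact_iff_ultrafilter_le_nhds]
  intro f hf
  by_contra hcon
  push_neg at hcon
  have hx : ∀ x ∈ K, ∃ s, s ∈ g ∧ x ∈ s ∧ s ∉ f := by
    intro x hxK
    by_contra hno
    push_neg at hno
    apply hcon x hxK
    rw [show (𝓝 x) = @nhds α (generateFrom g) x from rfl, nhds_generateFrom]
    refine le_iInf₂ fun s hs => ?_
    exact Filter.le_principal_iff.mpr (hno s hs.2 hs.1)
  choose! s hs1 hs2 hs3 using hx
  obtain ⟨c', hc'sub, hc'fin, hc'cov⟩ :=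
    h (s '' K) (by rintro _ ⟨x, hx, rfl⟩; exact hs1 x hx)
      (fun x hx => ⟨s x, ⟨x, hx, rfl⟩, hs2 x hx⟩)
  have hKf : K ∈ f := hf (Filter.mem_principal_self K)
  have : ⋃₀ c' ∈ f := Filter.mem_of_superset hKf hc'cov
  obtain ⟨t, htc', htf⟩ := (Ultrafilter.finite_sUnion_mem_iff hc'fin).mp this
  obtain ⟨x, hxK, rfl⟩ := hc'sub htc'
  exact hs3 x hxK htf

variable {L : Type u} [CompleteLattice L]

/-- The subbasis of opens. -/
def S (L : Type u) [CompleteLattice L] : Set (Set L) := {U | ∃ x : L, U = (Ici x)ᶜ}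

/-- The compact subbasis of opens. -/
def Sc (L : Type u) [CompleteLattice L] : Set (Set L) :=
  {U | ∃ k : L, IsCompactElement k ∧ U = (Ici k)ᶜ}

local instance instTop : TopologicalSpace L := latticeLowerTopology L

lemma top_eq : (instTop : TopologicalSpace L) = generateFrom (S L) := rfl

lemma lower_open {U : Set L} (h : IsOpen U) : IsLowerSet U := by
  have h' : GenerateOpen (S L) U := h
  clear h
  induction h' with
  | basic u hu =>
    obtain ⟨x, rfl⟩ := hu
    intro a b hba hb hxa
    exact hb (hxa.trans hba)
  | univ => exact isLowerSet_univ
  | inter u v _ _ hu hv => exact hu.inter hv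
  | sUnion C _ hC => exact isLowerSet_sUnion hC

lemma closed_Ici (x : L) : IsClosed (Ici x) :=
  ⟨TopologicalSpace.GenerateOpen.basic _ ⟨x, rfl⟩⟩

lemma closure_singleton (y : L) : closure {y} = Ici y := by
  apply subset_antisymm
  · exact closure_minimal (by simp) (closed_Ici y)
  · intro z hz
    rw [mem_closure_iff]
    intro U hU hzU
    exact ⟨y, lower_open hU hz hzU, rfl⟩

lemma t0 : T0Space L := by
  rw [t0Space_iff_inseparable]
  intro x y h
  have key : ∀ a b : L, Inseparable a b → b ≤ a := by
    intro a b hab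
    by_contra hba
    have hopen : IsOpen ((Ici b)ᶜ) := (closed_Ici b).isOpen_compl
    have hmem : a ∈ (Ici b)ᶜ := by simpa using hba
    have hb : b ∈ (Ici b)ᶜ := (hab.mem_open_iff hopen).mp hmem
    exact hb (le_refl b)
  exact le_antisymm (key y x h.symm) (key x y h)

lemma sober : QuasiSober L := by
  refine ⟨fun {C} hirr hcl => ⟨sInf C, ?_⟩⟩
  rw [IsGenericPoint, closure_singleton]
  apply subset_antisymm
  · have hupper : IsUpperSet C := by
      have := (lower_open hcl.isOpen_compl).compl
      simpa using this
    have hmem : sInf C ∈ C := by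
      by_contra hnot
      have hbasis := isTopologicalBasis_of_subbasis (top_eq (L := L))
      obtain ⟨v, ⟨F, ⟨hFfin, hFS⟩, rfl⟩, hxv, hvsub⟩ :=
        hbasis.exists_subset_of_mem_open (by exact hnot : sInf C ∈ Cᶜ) hcl.isOpen_compl
      have hcov : C ⊆ ⋃₀ ↑((hFfin.image compl).toFinset) := by
        intro z hz
        have : z ∉ ⋂₀ F := fun hzF => (hvsub hzF) hz
        obtain ⟨U, hUF, hzU⟩ : ∃ U ∈ F, z ∉ U := by
          by_contra hall; push_neg at hall; exact this fun U hU => hall U hU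
        exact ⟨Uᶜ, by simp [hUF], hzU⟩
      obtain ⟨z, hzmem, hCz⟩ := (isIrreducible_iff_sUnion_isClosed.mp hirr)
        ((hFfin.image compl).toFinset)
        (by
          intro z hz
          simp only [Set.Finite.mem_toFinset, mem_image] at hz
          obtain ⟨U, hUF, rfl⟩ := hz
          obtain ⟨x, rfl⟩ := hFS hUF
          simpa using closed_Ici x)
        hcov
      simp only [Set.Finite.mem_toFinset, mem_image] at hzmem
      obtain ⟨U, hUF, rfl⟩ := hzmem
      obtain ⟨x, rfl⟩ := hFS hUF
      have hxle : x ≤ sInf C := le_sInf (fun c hc => by simpa using hCz hc)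
      exact (hxv _ hUF) (by simpa using hxle)
    exact fun z hz => hupper hz hmem
  · exact fun x hx => sInf_le hx

lemma compact_basic (f : Set (Set L)) (hfc : f ⊆ Sc L) : IsCompact (⋂₀ f) := by
  have : @IsCompact L (generateFrom (S L)) (⋂₀ f) := by
    apply alexander_sub
    intro c hc hcov
    set X := {x : L | (Ici x)ᶜ ∈ c} with hX
    have hnot : sSup X ∉ ⋃₀ c := by
      rintro ⟨U, hU, hmem⟩
      obtain ⟨x, rfl⟩ := hc hU
      exact hmem (le_sSup hU)
    have h2 : sSup X ∉ ⋂₀ f := fun h => hnot (hcov h)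
    obtain ⟨U, hUf, hU⟩ : ∃ U ∈ f, sSup X ∉ U := by
      by_contra hall; push_neg at hall; exact h2 fun U hU => hall U hU
    obtain ⟨k, hk, rfl⟩ := hfc hUf
    have hkle : k ≤ sSup X := not_not.mp (by simpa using hU)
    obtain ⟨F, hFX, hkF⟩ := (CompleteLattice.isCompactElement_iff_exists_le_sSup_of_le_sSup (k := k)).mp hk X hkle
    refine ⟨(fun x => (Ici x)ᶜ) '' ↑F, ?_, F.finite_toSet.image _, ?_⟩
    · rintro _ ⟨x, hx, rfl⟩; exact hFX hx
    · intro z hz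
      by_contra hzc
      have hall : ∀ x ∈ F, x ≤ z := by
        intro x hx
        by_contra hxz
        exact hzc ⟨(Ici x)ᶜ, ⟨x, hx, rfl⟩, hxz⟩
      have hkz : k ≤ z := hkF.trans (Finset.sup_le fun x hx => hall x hx)
      exact (hz _ hUf) hkz
  exact this

lemma top_eq_Sc (halg : ∀ x : L, x = sSup {c : L | IsCompactElement c ∧ c ≤ x}) :
    (instTop : TopologicalSpace L) = generateFrom (Sc L) := by
  apply le_antisymm
  · exact le_generateFrom fun U hU => by
      obtain ⟨k, _, rfl⟩ := hU
      exact (closed_Ici k).isOpen_compl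
  · letI : TopologicalSpace L := generateFrom (Sc L)
    apply le_generateFrom
    rintro U ⟨x, rfl⟩
    have heq : (Ici x)ᶜ = ⋃ k ∈ {k : L | IsCompactElement k ∧ k ≤ x}, (Ici k)ᶜ := by
      ext z
      simp only [mem_compl_iff, mem_Ici, mem_iUnion, mem_setOf_eq, exists_prop]
      constructor
      · intro hxz
        by_contra hall
        push_neg at hall
        exact hxz (by
          conv_lhs => rw [halg x]
          exact sSup_le fun c hc => hall c hc)
      · rintro ⟨k, ⟨_, hkx⟩, hkz⟩ hxz
        exact hkz (hkx.trans hxz)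
    rw [heq]
    exact isOpen_biUnion fun k hk => GenerateOpen.basic _ ⟨k, hk.1, rfl⟩
end AlgLatSpectral


/-- an algebraic lattice with the lower topology is a spectral space. -/
theorem algebraic_lattice_spectral {L : Type u} [CompleteLattice L]
    (halg : ∀ x : L, x = sSup {c : L | IsCompactElement c ∧ c ≤ x}) :
    @IsSpectralSpace L (latticeLowerTopology L) := by
  letI : TopologicalSpace L := latticeLowerTopology L
  refine ⟨⟨by simpa using AlgLatSpectral.compact_basic ∅ (Set.empty_subset _)⟩,
    AlgLatSpectral.sober, AlgLatSpectral.t0,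
    (fun f => ⋂₀ f) '' {f | f.Finite ∧ f ⊆ AlgLatSpectral.Sc L},
    TopologicalSpace.isTopologicalBasis_of_subbasis (AlgLatSpectral.top_eq_Sc halg), ?_, ?_⟩
  · rintro U ⟨f, ⟨hf, hfc⟩, rfl⟩
    exact AlgLatSpectral.compact_basic f hfc
  · rintro U ⟨f, ⟨hf, hfc⟩, rfl⟩ V ⟨g, ⟨hg, hgc⟩, rfl⟩
    exact ⟨f ∪ g, ⟨hf.union hg, Set.union_subset hfc hgc⟩, Set.sInter_union f g⟩
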